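/- Let A be an n × n real matrix with 0 ≤ a_{ij} ≤ 1, x ∈ [0,1]^n, δ_i > 0, and M the matrix with m_{ii} = δ_i + Σ_k a_{ik}x_k and m_{ij} = a_{ij}x_i for i ≠ j. Then M is invertible and all diagonal entries of M^{-1} are strictly positive. -/

import Mathlib

open Finset Matrix

/-- Matrices of this form are nonsingular (only nonnegativity needed). -/
theorem aux17_det_ne (n : ℕ) (A : Matrix (Fin n) (Fin n) ℝ) (x δ : Fin n → ℝ)
    (hA : ∀ i j, 0 ≤ A i j) (hx : ∀ i, 0 ≤ x i) (hδ : ∀ i, 0 < δ i) :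
    (Matrix.of fun i j : Fin n =>
        if i = j then δ i + ∑ k, A i k * x k else A i j * x i).det ≠ 0 := by
  set M : Matrix (Fin n) (Fin n) ℝ := Matrix.of fun i j : Fin n =>
      if i = j then δ i + ∑ k, A i k * x k else A i j * x i with hMdef
  intro hdet
  obtain ⟨v, hv, hMv⟩ := (Matrix.exists_mulVec_eq_zero_iff).mpr hdet
  have hrow : ∀ i, ∑ j, M i j * v j = 0 := by
    intro i
    have := congrFun hMv i
    simpa [Matrix.mulVec, dotProduct] using this
  have hSnn : ∀ i, 0 ≤ ∑ k, A i k * x k := fun i =>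
    Finset.sum_nonneg fun k _ => mul_nonneg (hA i k) (hx k)
  have hMiipos : ∀ i, 0 < M i i := by
    intro i
    simp only [hMdef, Matrix.of_apply, eq_self_iff_true, if_true]
    exact add_pos_of_pos_of_nonneg (hδ i) (hSnn i)
  have hx0 : ∀ i, x i = 0 → v i = 0 := by
    intro i hxi
    have hsum : ∑ j, M i j * v j = M i i * v i := by
      refine Finset.sum_eq_single i (fun j _ hj => ?_) (fun h => absurd (Finset.mem_univ i) h)
      have : M i j = 0 := by
        simp only [hMdef, Matrix.of_apply, if_neg (Ne.symm hj)]
        rw [hxi]; ring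
      rw [this]; ring
    have h0 : M i i * v i = 0 := by rw [← hsum]; exact hrow i
    exact (mul_eq_zero.mp h0).resolve_left (ne_of_gt (hMiipos i))
  set w : Fin n → ℝ := fun i => v i / x i with hwdef
  have hvw : ∀ i, v i = x i * w i := by
    intro i
    by_cases hxi : x i = 0
    · rw [hx0 i hxi, hxi]; ring
    · simp only [hwdef]; field_simp
  -- v ≠ 0 gives some nonzero w
  have hw0 : ∃ i, w i ≠ 0 := by
    by_contra h
    push_neg at h
    apply hv
    funext i
    rw [hvw i, h i, mul_zero]
    rfl
  obtain ⟨i₀, hi₀⟩ := hw0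
  obtain ⟨i, _, hmax⟩ := Finset.exists_max_image Finset.univ (fun i => |w i|)
    ⟨i₀, Finset.mem_univ i₀⟩
  have hwi : w i ≠ 0 := by
    intro h
    have := hmax i₀ (Finset.mem_univ i₀)
    rw [h, abs_zero] at this
    exact hi₀ (abs_eq_zero.mp (le_antisymm this (abs_nonneg _)))
  have hxi : 0 < x i := by
    rcases lt_or_eq_of_le (hx i) with h | h
    · exact h
    · exfalso; apply hwi; simp [hwdef, ← h]
  -- the key equation
  set S := ∑ k, A i k * x k with hSdef
  set T := ∑ j ∈ Finset.univ.erase i, A i j * x j * w j with hTdef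
  have hkey : (δ i + S) * w i + T = 0 := by
    have hsum : ∑ j, M i j * v j = M i i * v i + ∑ j ∈ Finset.univ.erase i, M i j * v j := by
      rw [← Finset.add_sum_erase _ _ (Finset.mem_univ i)]
    have h1 : M i i * v i = x i * ((δ i + S) * w i) := by
      have hM1 : M i i = δ i + S := by
        rw [hSdef]
        simp only [hMdef, Matrix.of_apply, eq_self_iff_true, if_true]
      rw [hM1, hvw i]; ring
    have h2 : ∑ j ∈ Finset.univ.erase i, M i j * v j = x i * T := by
      rw [hTdef, Finset.mul_sum]
      refine Finset.sum_congr rfl fun j hj => ?_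
      have hji : j ≠ i := Finset.ne_of_mem_erase hj
      simp only [hMdef, Matrix.of_apply, if_neg (Ne.symm hji)]
      rw [hvw j]; ring
    have := hrow i
    rw [hsum, h1, h2, ← mul_add] at this
    exact (mul_eq_zero.mp this).resolve_left (ne_of_gt hxi)
  -- bound |T|
  have hTle : |T| ≤ S * |w i| := by
    calc |T| ≤ ∑ j ∈ Finset.univ.erase i, |A i j * x j * w j| := Finset.abs_sum_le_sum_abs _ _
    _ ≤ ∑ j ∈ Finset.univ.erase i, A i j * x j * |w i| := by
        refine Finset.sum_le_sum fun j _ => ?_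
        rw [abs_mul, abs_of_nonneg (mul_nonneg (hA i j) (hx j))]
        exact mul_le_mul_of_nonneg_left (hmax j (Finset.mem_univ j))
          (mul_nonneg (hA i j) (hx j))
    _ = (∑ j ∈ Finset.univ.erase i, A i j * x j) * |w i| := by rw [Finset.sum_mul]
    _ ≤ S * |w i| := by
        refine mul_le_mul_of_nonneg_right ?_ (abs_nonneg _)
        exact Finset.sum_le_sum_of_subset_of_nonneg (Finset.erase_subset _ _)
          (fun k _ _ => mul_nonneg (hA i k) (hx k))
  -- contradiction
  have h1 : (δ i + S) * (w i * w i) = -T * w i := by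
    have : (δ i + S) * w i = -T := by linarith [hkey]
    calc (δ i + S) * (w i * w i) = ((δ i + S) * w i) * w i := by ring
    _ = -T * w i := by rw [this]
  have h2 : -T * w i ≤ |T| * |w i| := by
    calc -T * w i ≤ |(-T) * w i| := le_abs_self _
    _ = |T| * |w i| := by rw [abs_mul, abs_neg]
  have h3 : |w i| * |w i| = w i * w i := by rw [← abs_mul, abs_mul_self]
  have hw2 : 0 < w i * w i := mul_self_pos.mpr hwi
  have hfinal : (δ i + S) * (w i * w i) ≤ S * (w i * w i) := by
    calc (δ i + S) * (w i * w i) = -T * w i := h1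
    _ ≤ |T| * |w i| := h2
    _ ≤ (S * |w i|) * |w i| := mul_le_mul_of_nonneg_right hTle (abs_nonneg _)
    _ = S * (w i * w i) := by rw [mul_assoc, h3]
  nlinarith [hδ i, hw2]

/-- Matrices of this form have positive determinant. -/
theorem aux17_det_pos (n : ℕ) (A : Matrix (Fin n) (Fin n) ℝ) (x δ : Fin n → ℝ)
    (hA : ∀ i j, 0 ≤ A i j) (hx : ∀ i, 0 ≤ x i) (hδ : ∀ i, 0 < δ i) :
    0 < (Matrix.of fun i j : Fin n =>
        if i = j then δ i + ∑ k, A i k * x k else A i j * x i).det := by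
  set f : ℝ → ℝ := fun t => (Matrix.of fun i j : Fin n =>
      if i = j then δ i + ∑ k, A i k * (t * x k) else A i j * (t * x i)).det with hfdef
  have hfc : Continuous f := by
    apply Continuous.matrix_det
    apply continuous_matrix
    intro i j
    simp only [Matrix.of_apply]
    by_cases h : i = j
    · simp only [if_pos h]; fun_prop
    · simp only [if_neg h]; fun_prop
  have hf0 : f 0 = ∏ i, δ i := by
    have : (Matrix.of fun i j : Fin n =>
        if i = j then δ i + ∑ k, A i k * ((0:ℝ) * x k) else A i j * ((0:ℝ) * x i)) =
        Matrix.diagonal δ := by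
      ext i j
      by_cases h : i = j
      · subst h; simp
      · simp [h, Matrix.diagonal_apply_ne _ h]
    rw [hfdef]
    simp only [this, Matrix.det_diagonal]
  have hfne : ∀ t ∈ Set.Icc (0:ℝ) 1, f t ≠ 0 := by
    intro t ht
    exact aux17_det_ne n A (fun k => t * x k) δ hA
      (fun k => mul_nonneg ht.1 (hx k)) hδ
  have hf1 : f 1 = (Matrix.of fun i j : Fin n =>
      if i = j then δ i + ∑ k, A i k * x k else A i j * x i).det := by
    rw [hfdef]; simp only [one_mul]
  rw [← hf1]
  rcases lt_trichotomy (f 1) 0 with h | h | h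
  · exfalso
    have h0 : (0:ℝ) ∈ Set.Icc (f 1) (f 0) := by
      constructor
      · exact h.le
      · rw [hf0]; exact (Finset.prod_pos (fun i _ => hδ i)).le
    have := intermediate_value_Icc' (by norm_num : (0:ℝ) ≤ 1) hfc.continuousOn h0
    obtain ⟨t, ht, hft⟩ := this
    exact hfne t ht hft
  · exact absurd h (hfne 1 (by norm_num))
  · exact h

/-- With `0 ≤ a_{ij} ≤ 1`, `x ∈ [0,1]^n`, `δ_i > 0`, the matrix
`M` with `m_{ii} = δ_i + Σ_k a_{ik} x_k` and `m_{ij} = a_{ij} x_i` (`i ≠ j`)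
is invertible and all diagonal entries of `M⁻¹` are strictly positive. -/
theorem stmt17 (n : ℕ) (A : Matrix (Fin n) (Fin n) ℝ)
    (hA : ∀ i j, A i j ∈ Set.Icc (0:ℝ) 1) (x : Fin n → ℝ)
    (hx : ∀ i, x i ∈ Set.Icc (0:ℝ) 1) (δ : Fin n → ℝ) (hδ : ∀ i, 0 < δ i)
    (M : Matrix (Fin n) (Fin n) ℝ)
    (hM : M = Matrix.of fun i j =>
        if i = j then δ i + ∑ k, A i k * x k else A i j * x i) :
    IsUnit M ∧ ∀ i, 0 < M⁻¹ i i := by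
  have hA' : ∀ i j, 0 ≤ A i j := fun i j => (hA i j).1
  have hx' : ∀ i, 0 ≤ x i := fun i => (hx i).1
  have hdet : 0 < M.det := by rw [hM]; exact aux17_det_pos n A x δ hA' hx' hδ
  refine ⟨(Matrix.isUnit_iff_isUnit_det _).mpr (isUnit_iff_ne_zero.mpr hdet.ne'), ?_⟩
  intro i
  rw [Matrix.inv_def, Matrix.smul_apply, Ring.inverse_eq_inv, smul_eq_mul]
  refine mul_pos (inv_pos.mpr hdet) ?_
  -- adjugate diagonal entry = det of the principal minor
  cases n with
  | zero => exact i.elim0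
  | succ m =>
    rw [Matrix.adjugate_apply]
    have hB : (M.updateRow i (Pi.single i 1)).det
        = (M.submatrix i.succAbove i.succAbove).det := by
      rw [Matrix.det_succ_row _ i]
      rw [Finset.sum_eq_single i]
      · have h1 : M.updateRow i (Pi.single i 1) i i = 1 := by
          rw [Matrix.updateRow_self, Pi.single_eq_same]
        have h2 : ((-1:ℝ)) ^ ((i:ℕ) + i) = 1 := (Even.neg_one_pow ⟨i, rfl⟩)
        have h3 : (M.updateRow i (Pi.single i 1)).submatrix i.succAbove i.succAbove
            = M.submatrix i.succAbove i.succAbove := by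
          ext p q
          simp only [Matrix.submatrix_apply]
          rw [Matrix.updateRow_ne (Fin.succAbove_ne i p)]
        rw [h1, h2, h3, one_mul, one_mul]
      · intro j _ hj
        have : M.updateRow i (Pi.single i 1) i j = 0 := by
          rw [Matrix.updateRow_self, Pi.single_eq_of_ne hj]
        rw [this]; ring
      · intro h; exact absurd (Finset.mem_univ i) h
    rw [hB]
    -- the minor has the same form
    have hminor : M.submatrix i.succAbove i.succAbove =
        Matrix.of fun p q : Fin m =>
          if p = q then (δ (i.succAbove p) + A (i.succAbove p) i * x i)
              + ∑ k, (A (i.succAbove p) (i.succAbove k)) * (x (i.succAbove k))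
          else (A (i.succAbove p) (i.succAbove q)) * (x (i.succAbove p)) := by
      ext p q
      simp only [Matrix.submatrix_apply, hM, Matrix.of_apply]
      by_cases hpq : p = q
      · subst hpq
        rw [if_pos rfl, if_pos rfl]
        rw [Fin.sum_univ_succAbove (fun k => A (i.succAbove p) k * x k) i]
        ring
      · rw [if_neg (fun h => hpq (Fin.succAbove_right_injective h)), if_neg hpq]
    rw [hminor]
    exact aux17_det_pos m _ _ _
      (fun p q => hA' _ _)
      (fun p => hx' _)
      (fun p => add_pos_of_pos_of_nonneg (hδ _) (mul_nonneg (hA' _ _) (hx' _)))
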